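/- arXiv:math/9912053 — 2 statements merged into one kernel-verified Lean document; each statement's English description precedes it below -/
import Mathlib

section
/- For m odd and a even, det_{0≤i,j≤a-1}(δ_{ij} + (-1)^j [m+i+j choose j]_{-1}) = det(I(a/2) + B(a/2, (m-1)/2)) · det(I(a/2) - B(a/2, (m+1)/2)), where B(N,μ) is the N×N matrix with entries binomial(μ+i+j, j) and [·]_{-1} is the q-binomial at q=-1. -/
/-- The Gaussian binomial coefficient as a polynomial in `q`, defined by the
`q`-Pascal recurrence `[n+1, k+1] = [n, k] + q^(k+1) [n, k+1]`. -/
noncomputable def qbinom : ℕ → ℕ → Polynomial ℤ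
  | _, 0 => 1
  | 0, _ + 1 => 0
  | n + 1, k + 1 => qbinom n k + Polynomial.X ^ (k + 1) * qbinom n (k + 1)

lemma qbinom_eval : ∀ n k, (qbinom n k).eval (-1) =
    if Even n ∧ Odd k then 0 else (Nat.choose (n/2) (k/2) : ℤ) := by
  intro n
  induction n with
  | zero =>
    intro k
    match k with
    | 0 => simp [qbinom]
    | k + 1 =>
      show (0 : Polynomial ℤ).eval (-1) = _
      rcases Nat.even_or_odd (k+1) with ⟨t, ht⟩ | ho
      · rw [if_neg (by simp only [Nat.even_iff, Nat.odd_iff]; omega)]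
        rw [show (k+1)/2 = t from by omega]
        have h2 : 1 ≤ t := by omega
        simp [Nat.choose_eq_zero_of_lt (show 0/2 < t by omega)]
      · rw [if_pos ⟨Even.zero, ho⟩]; simp
  | succ n ih =>
    intro k
    match k with
    | 0 => simp [qbinom]
    | k + 1 =>
      show ((qbinom n k + Polynomial.X ^ (k + 1) * qbinom n (k + 1)).eval (-1)) = _
      rw [Polynomial.eval_add, Polynomial.eval_mul, Polynomial.eval_pow,
        Polynomial.eval_X, ih k, ih (k+1)]
      rcases Nat.even_or_odd n with ⟨s, hs⟩ | ⟨s, hs⟩ <;>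
        rcases Nat.even_or_odd k with ⟨t, ht⟩ | ⟨t, ht⟩ <;> subst hs ht
      · -- n = s+s, k = t+t
        rw [if_neg (by simp only [Nat.even_iff, Nat.odd_iff]; omega),
            if_pos ⟨⟨s, rfl⟩, ⟨t, by omega⟩⟩,
            if_neg (by simp only [Nat.even_iff, Nat.odd_iff]; omega)]
        simp only [show (s+s)/2 = s from by omega, show (t+t)/2 = t from by omega,
          show (s+s+1)/2 = s from by omega, show (t+t+1)/2 = t from by omega]
        ring
      · -- n = s+s, k = 2t+1
        rw [if_pos ⟨⟨s, rfl⟩, ⟨t, rfl⟩⟩,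
            if_neg (by simp only [Nat.even_iff, Nat.odd_iff]; omega),
            if_neg (by simp only [Nat.even_iff, Nat.odd_iff]; omega)]
        rw [show (-1 : ℤ) ^ (2*t+1+1) = 1 from Even.neg_one_pow ⟨t+1, by ring⟩]
        simp only [show (s+s)/2 = s from by omega, show (2*t+1+1)/2 = t+1 from by omega,
          show (s+s+1)/2 = s from by omega]
        ring
      · -- n = 2s+1, k = t+t
        rw [if_neg (by simp only [Nat.even_iff, Nat.odd_iff]; omega),
            if_neg (by simp only [Nat.even_iff, Nat.odd_iff]; omega),
            if_pos ⟨⟨s+1, by omega⟩, ⟨t, by omega⟩⟩]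
        rw [show (-1 : ℤ) ^ (t+t+1) = -1 from Odd.neg_one_pow ⟨t, by ring⟩]
        simp only [show (2*s+1)/2 = s from by omega, show (t+t)/2 = t from by omega,
          show (t+t+1)/2 = t from by omega]
        ring
      · -- n = 2s+1, k = 2t+1
        rw [if_neg (by simp only [Nat.even_iff, Nat.odd_iff]; omega),
            if_neg (by simp only [Nat.even_iff, Nat.odd_iff]; omega),
            if_neg (by simp only [Nat.even_iff, Nat.odd_iff]; omega)]
        rw [show (-1 : ℤ) ^ (2*t+1+1) = 1 from Even.neg_one_pow ⟨t+1, by ring⟩]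
        simp only [show (2*s+1)/2 = s from by omega, show (2*t+1)/2 = t from by omega,
          show (2*s+1+1)/2 = s+1 from by omega, show (2*t+1+1)/2 = t+1 from by omega]
        rw [one_mul, ← Nat.cast_add, Nat.choose_succ_succ']

lemma qe1 (n t : ℕ) : (qbinom n (2*t)).eval (-1) = ((n/2).choose t : ℤ) := by
  rw [qbinom_eval, if_neg (by simp only [Nat.even_iff, Nat.odd_iff]; omega),
    show 2*t/2 = t from by omega]

lemma qe2 (n t : ℕ) (hn : Even n) : (qbinom n (2*t+1)).eval (-1) = 0 := by
  rw [qbinom_eval, if_pos ⟨hn, ⟨t, rfl⟩⟩]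

lemma qe3 (n t : ℕ) (hn : ¬ Even n) : (qbinom n (2*t+1)).eval (-1) = ((n/2).choose t : ℤ) := by
  rw [qbinom_eval, if_neg (by tauto), show (2*t+1)/2 = t from by omega]

def interleave (N : ℕ) : (Fin N ⊕ Fin N) ≃ Fin (2*N) where
  toFun := Sum.elim (fun s => ⟨2*s.val, by have := s.isLt; omega⟩)
    (fun s => ⟨2*s.val+1, by have := s.isLt; omega⟩)
  invFun := fun i => if i.val % 2 = 0 then Sum.inl ⟨i.val/2, by have := i.isLt; omega⟩
    else Sum.inr ⟨i.val/2, by have := i.isLt; omega⟩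
  left_inv := by
    rintro (s | s) <;> dsimp only [Sum.elim_inl, Sum.elim_inr]
    · rw [if_pos (by omega)]
      simp only [Sum.inl.injEq, Fin.ext_iff]; omega
    · rw [if_neg (by omega)]
      simp only [Sum.inr.injEq, Fin.ext_iff]; omega
  right_inv := by
    intro i
    dsimp only
    by_cases h : i.val % 2 = 0
    · rw [if_pos h]; simp only [Sum.elim_inl, Fin.ext_iff]; omega
    · rw [if_neg h]; simp only [Sum.elim_inr, Fin.ext_iff]; omega

theorem stmt10 (a m : ℕ) (ha : Even a) (hm : Odd m) :
    let B1 : Matrix (Fin (a / 2)) (Fin (a / 2)) ℚ :=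
      Matrix.of fun i j => (Nat.choose ((m - 1) / 2 + i.val + j.val) j.val : ℚ)
    let B2 : Matrix (Fin (a / 2)) (Fin (a / 2)) ℚ :=
      Matrix.of fun i j => (Nat.choose ((m + 1) / 2 + i.val + j.val) j.val : ℚ)
    Matrix.det (Matrix.of fun i j : Fin a =>
        (if i = j then (1 : ℚ) else 0) +
          (-1 : ℚ) ^ j.val * (((qbinom (m + i.val + j.val) j.val).eval (-1) : ℤ) : ℚ)) =
      Matrix.det (1 + B1) * Matrix.det (1 - B2) := by
  intro B1 B2
  obtain ⟨μ, hμ⟩ := hm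
  have haN : a = 2 * (a / 2) := by obtain ⟨c, hc⟩ := ha; omega
  set M : Matrix (Fin a) (Fin a) ℚ := Matrix.of fun i j : Fin a =>
        (if i = j then (1 : ℚ) else 0) +
          (-1 : ℚ) ^ j.val * (((qbinom (m + i.val + j.val) j.val).eval (-1) : ℤ) : ℚ) with hM
  let e : (Fin (a/2) ⊕ Fin (a/2)) ≃ Fin a := (interleave (a/2)).trans (finCongr haN.symm)
  have he1 : ∀ s : Fin (a/2), (e (Sum.inl s)).val = 2 * s.val := fun s => rfl
  have he2 : ∀ s : Fin (a/2), (e (Sum.inr s)).val = 2 * s.val + 1 := fun s => rfl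
  rw [← Matrix.det_submatrix_equiv_self e M]
  have hblock : M.submatrix e e = Matrix.fromBlocks (1 + B1) 0
      (Matrix.of fun s t : Fin (a/2) => ((μ + 1 + s.val + t.val).choose t.val : ℚ)) (1 - B2) := by
    ext i j
    have hB1 : ∀ s t : Fin (a/2), B1 s t = (((m - 1) / 2 + s.val + t.val).choose t.val : ℚ) :=
      fun s t => rfl
    have hB2 : ∀ s t : Fin (a/2), B2 s t = (((m + 1) / 2 + s.val + t.val).choose t.val : ℚ) :=
      fun s t => rfl
    subst hμ
    rcases i with s | s <;> rcases j with t | t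
    · show M (e (Sum.inl s)) (e (Sum.inl t)) = (1 + B1) s t
      rw [hM]
      simp only [Matrix.of_apply, Matrix.add_apply, Matrix.one_apply]
      rw [he1 s, he1 t, qe1,
        show (2*μ+1 + 2*s.val + 2*t.val)/2 = (2*μ+1-1)/2 + s.val + t.val from by omega,
        hB1, show (-1 : ℚ) ^ (2 * t.val) = 1 from Even.neg_one_pow ⟨t.val, by ring⟩]
      simp only [EmbeddingLike.apply_eq_iff_eq, Sum.inl.injEq]
      push_cast
      ring
    · show M (e (Sum.inl s)) (e (Sum.inr t)) = 0
      rw [hM]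
      simp only [Matrix.of_apply]
      rw [he1 s, he2 t, qe2 _ _ ⟨μ + s.val + t.val + 1, by omega⟩]
      simp
    · show M (e (Sum.inr s)) (e (Sum.inl t)) =
        ((μ + 1 + s.val + t.val).choose t.val : ℚ)
      rw [hM]
      simp only [Matrix.of_apply]
      rw [he2 s, he1 t, qe1,
        show (2*μ+1 + (2*s.val+1) + 2*t.val)/2 = μ + 1 + s.val + t.val from by omega,
        show (-1 : ℚ) ^ (2 * t.val) = 1 from Even.neg_one_pow ⟨t.val, by ring⟩]
      simp
    · show M (e (Sum.inr s)) (e (Sum.inr t)) = (1 - B2) s t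
      rw [hM]
      simp only [Matrix.of_apply, Matrix.sub_apply, Matrix.one_apply]
      rw [he2 s, he2 t,
        qe3 _ _ (by simp only [Nat.even_iff]; omega),
        show (2*μ+1 + (2*s.val+1) + (2*t.val+1))/2 = (2*μ+1+1)/2 + s.val + t.val from by omega,
        hB2, show (-1 : ℚ) ^ (2 * t.val + 1) = -1 from Odd.neg_one_pow ⟨t.val, by ring⟩]
      simp only [EmbeddingLike.apply_eq_iff_eq, Sum.inr.injEq]
      push_cast
      ring
  rw [hblock, Matrix.det_fromBlocks_zero₁₂]
end

section
/- Let a, m be even nonnegative integers, m/2 < e ≤ m, 1 ≤ s ≤ a+m-e, and c an indeterminate. For each 1 ≤ i ≤ a: ∑_{j=s}^{s+e} C(e, j-s) · (c+m+i-j+1)_{j-1} · (-c-2e-i+j+1)_{a+m-j} = 0, where (α)_k is the rising factorial and the identity holds in ℚ(c) (equivalently as polynomial identity in c). -/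
/-- The rising factorial (Pochhammer symbol) `(x)_k = x (x+1) ⋯ (x+k-1)`. -/
def asc (x : ℚ) (k : ℕ) : ℚ := ∏ i ∈ Finset.range k, (x + i)

lemma asc_succ (x : ℚ) (n : ℕ) : asc x (n + 1) = asc x n * (x + n) := by
  simp [asc, Finset.prod_range_succ]

lemma asc_add (x : ℚ) (n k : ℕ) : asc x (n + k) = asc x n * asc (x + n) k := by
  rw [asc, asc, asc, Finset.prod_range_add]
  congr 1
  apply Finset.prod_congr rfl
  intro j _
  push_cast
  ring

lemma asc_reflect (y : ℚ) (n : ℕ) : asc (y - n) n = (-1) ^ n * asc (1 - y) n := by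
  rw [asc, asc, ← Finset.prod_range_reflect (fun j => (y - n + j))]
  rw [show ((-1 : ℚ)) ^ n = ∏ _j ∈ Finset.range n, (-1 : ℚ) by simp,
    ← Finset.prod_mul_distrib]
  apply Finset.prod_congr rfl
  intro j hj
  have hj' : j < n := Finset.mem_range.mp hj
  have : ((n - 1 - j : ℕ) : ℚ) = (n : ℚ) - 1 - j := by
    push_cast [Nat.cast_sub (by omega : j ≤ n - 1), Nat.cast_sub (by omega : 1 ≤ n)]
    ring
  rw [this]
  ring

lemma asc_vandermonde (x y : ℚ) (n : ℕ) :
    asc (x + y) n = ∑ k ∈ Finset.range (n + 1),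
      (n.choose k : ℚ) * (asc x k * asc y (n - k)) := by
  induction n with
  | zero => simp [asc]
  | succ n ih =>
    have h1 : ∀ k ∈ Finset.range (n + 1),
        (n.choose k : ℚ) * (asc x k * asc y (n - k)) * (x + y + n)
          = (n.choose k : ℚ) * (asc x (k + 1) * asc y (n - k))
            + (n.choose k : ℚ) * (asc x k * asc y (n + 1 - k)) := by
      intro k hk
      have hk' : k ≤ n := by simpa [Nat.lt_succ_iff] using hk
      have h2 : n + 1 - k = (n - k) + 1 := by omega
      rw [asc_succ, h2, asc_succ]
      have : ((n - k : ℕ) : ℚ) = (n : ℚ) - k := by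
        push_cast [Nat.cast_sub hk']; ring
      rw [this]
      ring
    have h3 : ∑ k ∈ Finset.range (n + 2),
        ((n + 1).choose k : ℚ) * (asc x k * asc y (n + 1 - k))
        = (∑ k ∈ Finset.range (n + 1),
            (n.choose k : ℚ) * (asc x (k + 1) * asc y (n - k)))
          + ∑ k ∈ Finset.range (n + 1),
            (n.choose k : ℚ) * (asc x k * asc y (n + 1 - k)) := by
      rw [Finset.sum_range_succ'
        (fun k => ((n + 1).choose k : ℚ) * (asc x k * asc y (n + 1 - k))) (n + 1)]
      have h4 : ∀ k ∈ Finset.range (n + 1),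
          ((n + 1).choose (k + 1) : ℚ) * (asc x (k + 1) * asc y (n + 1 - (k + 1)))
          = (n.choose k : ℚ) * (asc x (k + 1) * asc y (n - k))
            + (n.choose (k + 1) : ℚ) * (asc x (k + 1) * asc y (n + 1 - (k + 1))) := by
        intro k _
        have : n + 1 - (k + 1) = n - k := by omega
        rw [this, Nat.choose_succ_succ]
        push_cast
        ring
      rw [Finset.sum_congr rfl h4, Finset.sum_add_distrib]
      have h5 : (∑ k ∈ Finset.range (n + 1),
            (n.choose (k + 1) : ℚ) * (asc x (k + 1) * asc y (n + 1 - (k + 1))))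
          + ((n + 1).choose 0 : ℚ) * (asc x 0 * asc y (n + 1 - 0))
          = ∑ k ∈ Finset.range (n + 1),
            (n.choose k : ℚ) * (asc x k * asc y (n + 1 - k)) := by
        have := (Finset.sum_range_succ'
          (fun k => (n.choose k : ℚ) * (asc x k * asc y (n + 1 - k))) (n + 1)).symm
        simp only [Nat.choose_zero_right] at this ⊢
        rw [this, Finset.sum_range_succ, Nat.choose_succ_self]
        simp
      rw [add_assoc, h5]
    rw [asc_succ, ih, Finset.sum_mul, Finset.sum_congr rfl h1,
      Finset.sum_add_distrib, h3]

theorem stmt12 (a m e s i : ℕ) (ha : Even a) (hm : Even m)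
    (he1 : m < 2 * e) (he2 : e ≤ m) (hs1 : 1 ≤ s) (hs2 : s ≤ a + m - e)
    (hi1 : 1 ≤ i) (hia : i ≤ a) (c : ℚ) :
    ∑ j ∈ Finset.Icc s (s + e),
        (Nat.choose e (j - s) : ℚ) *
          asc (c + m + i - j + 1) (j - 1) *
          asc (-c - 2 * e - i + j + 1) (a + m - j) = 0 := by
  have hse : s + e ≤ a + m := by omega
  have hmap : Finset.Icc s (s + e)
      = (Finset.range (e + 1)).map ⟨(s + ·), add_right_injective s⟩ := by
    ext j
    simp only [Finset.mem_Icc, Finset.mem_map, Finset.mem_range,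
      Function.Embedding.coeFn_mk]
    constructor
    · intro h; exact ⟨j - s, by omega, by omega⟩
    · rintro ⟨k, hk, rfl⟩; omega
  rw [hmap, Finset.sum_map]
  simp only [Function.Embedding.coeFn_mk]
  have hterm : ∀ k ∈ Finset.range (e + 1),
      (Nat.choose e (s + k - s) : ℚ) *
          asc (c + m + i - ((s + k : ℕ) : ℚ) + 1) (s + k - 1) *
          asc (-c - 2 * e - i + ((s + k : ℕ) : ℚ) + 1) (a + m - (s + k))
      = ((-1) ^ e * asc (c + m + i - s + 1) (s - 1)
            * asc (-c - e - i + s + 1) (a + m - s - e))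
        * ((e.choose k : ℚ) * (asc ((s : ℚ) - c - m - i) k
            * asc (c + e + i - s) (e - k))) := by
    intro k hk
    have hk' : k ≤ e := by simpa [Nat.lt_succ_iff] using hk
    have h1 : s + k - s = k := by omega
    have h2 : s + k - 1 = k + (s - 1) := by omega
    have h3 : a + m - (s + k) = (e - k) + (a + m - s - e) := by omega
    rw [h1, h2, h3, asc_add, asc_add]
    have e1 : c + (m : ℚ) + i - (↑(s + k)) + 1 = (c + m + i - s + 1) - (k : ℚ) := by
      push_cast; ring
    rw [e1, asc_reflect]
    have e2 : (1 : ℚ) - (c + m + i - s + 1) = (s : ℚ) - c - m - i := by ring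
    rw [e2]
    have e3 : (c + (m : ℚ) + i - s + 1 - k) + (k : ℚ) = c + m + i - s + 1 := by ring
    rw [e3]
    have e4 : -c - 2 * (e : ℚ) - i + (↑(s + k)) + 1
        = (-c - e - i + s + 1) - ((e - k : ℕ) : ℚ) := by
      push_cast [Nat.cast_sub hk']; ring
    rw [e4, asc_reflect]
    have e5 : (1 : ℚ) - (-c - e - i + s + 1) = c + (e : ℚ) + i - s := by ring
    rw [e5]
    have e6 : (-c - (e : ℚ) - i + s + 1 - ↑(e - k)) + ((e - k : ℕ) : ℚ)
        = -c - e - i + s + 1 := by ring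
    rw [e6]
    rw [show ((-1 : ℚ)) ^ e = (-1) ^ k * (-1) ^ (e - k) by
      rw [← pow_add, show k + (e - k) = e by omega]]
    ring
  rw [Finset.sum_congr rfl hterm, ← Finset.mul_sum, ← asc_vandermonde]
  have : (s : ℚ) - c - m - i + (c + e + i - s) = (e : ℚ) - m := by ring
  rw [this]
  have hzero : asc ((e : ℚ) - m) e = 0 := by
    apply Finset.prod_eq_zero (Finset.mem_range.mpr (show m - e < e by omega))
    push_cast [Nat.cast_sub he2]
    ring
  rw [hzero, mul_zero]
end
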